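/- A connected graph G on n ≥ 3 vertices satisfies α'₁(G) = 2 if and only if G is isomorphic to one of: C₃, C₄, the diamond D₄ = K₄ minus an edge, K₄, the graph U_{1,3} obtained from the star K_{1,3} by adding one edge between two leaves, the path P₄, or the star K_{1,n-1}. -/

import Mathlib

open scoped Classical

/-- Two edges (as unordered pairs) share a vertex. -/
def ShareVertex {V : Type*} (e f : Sym2 V) : Prop := ∃ v, v ∈ e ∧ v ∈ f

/-- `M` is a 1-nearly edge independent set of `G`: a set of edges of `G` containing
exactly one pair of distinct edges sharing a common vertex. -/
def IsOneNearlyEdgeIndep {V : Type*} (G : SimpleGraph V) (M : Finset (Sym2 V)) : Prop :=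
  ↑M ⊆ G.edgeSet ∧
    (M.offDiag.filter fun p => ShareVertex p.1 p.2).card = 2

/-- The 1-nearly edge independence number `α'₁(G)`: maximum cardinality of a
1-nearly edge independent set, `0` if none exists. -/
noncomputable def edgeAlpha1 {V : Type*} (G : SimpleGraph V) : ℕ :=
  sSup {k | ∃ M : Finset (Sym2 V), IsOneNearlyEdgeIndep G M ∧ M.card = k}

/-- `I` is a 1-nearly vertex independent set of `G`: exactly one pair of distinct
vertices of `I` is adjacent in `G`. -/
def IsOneNearlyVertexIndep {V : Type*} (G : SimpleGraph V) (I : Finset V) : Prop :=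
  (I.offDiag.filter fun p => G.Adj p.1 p.2).card = 2

/-- The 1-nearly vertex independence number `α₁(G)`. -/
noncomputable def vertexAlpha1 {V : Type*} (G : SimpleGraph V) : ℕ :=
  sSup {k | ∃ I : Finset V, IsOneNearlyVertexIndep G I ∧ I.card = k}

/-- The star `K_{1,n-1}` on `Fin n` with center `0`. -/
def starGraph (n : ℕ) : SimpleGraph (Fin n) where
  Adj a b := a ≠ b ∧ (a.val = 0 ∨ b.val = 0)
  symm := ⟨fun a b ⟨h1, h2⟩ => ⟨h1.symm, h2.symm⟩⟩
  loopless := ⟨fun a h => h.1 rfl⟩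

/-- The diamond `D₄ = K₄ - e`. -/
def diamondGraph : SimpleGraph (Fin 4) :=
  (⊤ : SimpleGraph (Fin 4)).deleteEdges {s(0, 1)}

/-- `U_{1,3}`: the star `K_{1,3}` plus an edge between two leaves. -/
def U13 : SimpleGraph (Fin 4) :=
  SimpleGraph.fromEdgeSet {s(0, 1), s(0, 2), s(0, 3), s(1, 2)}

open SimpleGraph

def Cherry {V : Type*} (G : SimpleGraph V) (u v w : V) : Prop :=
  u ≠ w ∧ G.Adj u v ∧ G.Adj v w

def Good1 {V : Type*} (G : SimpleGraph V) : Prop := ∃ u v w, Cherry G u v w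

def Good2 {V : Type*} (G : SimpleGraph V) : Prop :=
  ∀ u v w x y, Cherry G u v w → G.Adj x y →
    x = u ∨ x = v ∨ x = w ∨ y = u ∨ y = v ∨ y = w

section Char
variable {V : Type*} [Fintype V] (G : SimpleGraph V)

lemma bdd : BddAbove {k | ∃ M : Finset (Sym2 V), IsOneNearlyEdgeIndep G M ∧ M.card = k} :=
  ⟨Fintype.card (Sym2 V), fun k ⟨M, _, hk⟩ => hk ▸ Finset.card_le_univ M⟩

lemma sym2_ne_of {u v w : V} (huv : u ≠ v) (huw : u ≠ w) : s(u,v) ≠ s(v,w) := by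
  intro h
  rw [Sym2.eq_iff] at h
  rcases h with ⟨h1, h2⟩ | ⟨h1, h2⟩
  · exact huv h1
  · exact huw h1

lemma pair_indep {u v w : V} (h : Cherry G u v w) :
    IsOneNearlyEdgeIndep G {s(u,v), s(v,w)} ∧ ({s(u,v), s(v,w)} : Finset (Sym2 V)).card = 2 := by
  obtain ⟨huw, huv, hvw⟩ := h
  have hne : s(u,v) ≠ s(v,w) := sym2_ne_of huv.ne huw
  have hcard : ({s(u,v), s(v,w)} : Finset (Sym2 V)).card = 2 := by
    rw [Finset.card_insert_of_notMem (by simpa using hne), Finset.card_singleton]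
  refine ⟨⟨?_, ?_⟩, hcard⟩
  · intro e he
    simp only [Finset.coe_insert, Finset.coe_singleton, Set.mem_insert_iff,
      Set.mem_singleton_iff] at he
    rcases he with rfl | rfl
    · exact huv
    · exact hvw
  · rw [Finset.filter_true_of_mem, Finset.offDiag_card, hcard]
    intro p hp
    rw [Finset.mem_offDiag] at hp
    obtain ⟨h1, h2, h3⟩ := hp
    simp only [Finset.mem_insert, Finset.mem_singleton] at h1 h2
    exact ⟨v, by rcases h1 with h | h <;> rw [h] <;> simp, by rcases h2 with h | h <;> rw [h] <;> simp⟩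

lemma mem_sym2_iff {v : V} {e : Sym2 V} : v ∈ e ↔ ∃ u, e = s(v, u) := Sym2.mem_iff_exists

lemma card_le_two_of_good2 (hg2 : Good2 G) (M : Finset (Sym2 V))
    (hM : IsOneNearlyEdgeIndep G M) : M.card ≤ 2 := by
  by_contra hc
  push_neg at hc
  obtain ⟨hsub, hfil⟩ := hM
  -- get the sharing pair
  have hne : (M.offDiag.filter fun p => ShareVertex p.1 p.2).Nonempty := by
    rw [← Finset.card_pos, hfil]; norm_num
  obtain ⟨⟨e, f⟩, hp⟩ := hne
  rw [Finset.mem_filter, Finset.mem_offDiag] at hp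
  obtain ⟨⟨heM, hfM, hef⟩, vv, hve, hvf⟩ := hp
  obtain ⟨u, he⟩ := mem_sym2_iff.mp hve
  obtain ⟨w, hf⟩ := mem_sym2_iff.mp hvf
  rw [he] at heM hef
  rw [hf] at hfM hef
  have hadjvu : G.Adj vv u := (G.mem_edgeSet).mp (hsub heM)
  have hadjvw : G.Adj vv w := (G.mem_edgeSet).mp (hsub hfM)
  have huw : u ≠ w := fun h => hef (by rw [h])
  -- third edge
  have h3 : (M \ {s(vv,u), s(vv,w)}).Nonempty := by
    rw [← Finset.card_pos]
    have := Finset.le_card_sdiff ({s(vv,u), s(vv,w)} : Finset (Sym2 V)) M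
    have h2 : ({s(vv,u), s(vv,w)} : Finset (Sym2 V)).card ≤ 2 := by
      apply (Finset.card_insert_le _ _).trans; simp
    omega
  obtain ⟨g, hg⟩ := h3
  rw [Finset.mem_sdiff, Finset.mem_insert, Finset.mem_singleton] at hg
  obtain ⟨hgM, hgne⟩ := hg
  push_neg at hgne
  obtain ⟨hge, hgf⟩ := hgne
  obtain ⟨⟨x, y⟩, rfl⟩ := Quot.exists_rep g
  have hadjxy : G.Adj x y := (G.mem_edgeSet).mp (hsub hgM)
  have hmem : x = u ∨ x = vv ∨ x = w ∨ y = u ∨ y = vv ∨ y = w :=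
    hg2 u vv w x y ⟨huw, hadjvu.symm, hadjvw⟩ hadjxy
  have hshare : ShareVertex (s(x,y)) s(vv,u) ∨ ShareVertex (s(x,y)) s(vv,w) := by
    rcases hmem with rfl | rfl | rfl | rfl | rfl | rfl
    · exact Or.inl ⟨x, by simp, by simp⟩
    · exact Or.inl ⟨x, by simp, by simp⟩
    · exact Or.inr ⟨x, by simp, by simp⟩
    · exact Or.inl ⟨y, by simp, by simp⟩
    · exact Or.inl ⟨y, by simp, by simp⟩
    · exact Or.inr ⟨y, by simp, by simp⟩
  -- now filter has ≥ 3 elements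
  have hsubf : ∀ q ∈ ({((s(x,y) : Sym2 V), if ShareVertex (s(x,y)) s(vv,u) then s(vv,u) else s(vv,w)), (s(vv,u), s(vv,w)), (s(vv,w), s(vv,u))} : Finset (Sym2 V × Sym2 V)),
      q ∈ M.offDiag.filter fun p => ShareVertex p.1 p.2 := by
    intro q hq
    simp only [Finset.mem_insert, Finset.mem_singleton] at hq
    rw [Finset.mem_filter, Finset.mem_offDiag]
    rcases hq with rfl | rfl | rfl
    · by_cases hs : ShareVertex (s(x,y)) s(vv,u)
      · simp only [if_pos hs]; exact ⟨⟨hgM, heM, hge⟩, hs⟩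
      · simp only [if_neg hs]; exact ⟨⟨hgM, hfM, hgf⟩, hshare.resolve_left hs⟩
    · exact ⟨⟨heM, hfM, hef⟩, vv, by simp, by simp⟩
    · exact ⟨⟨hfM, heM, Ne.symm hef⟩, vv, by simp, by simp⟩
  have hc3 : ({((s(x,y) : Sym2 V), if ShareVertex (s(x,y)) s(vv,u) then s(vv,u) else s(vv,w)), (s(vv,u), s(vv,w)), (s(vv,w), s(vv,u))} : Finset (Sym2 V × Sym2 V)).card = 3 := by
    rw [Finset.card_insert_of_notMem, Finset.card_insert_of_notMem, Finset.card_singleton]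
    · simp only [Finset.mem_singleton, Prod.mk.injEq, not_and]
      intro h; exact absurd h hef
    · simp only [Finset.mem_insert, Finset.mem_singleton, Prod.mk.injEq, not_or, not_and]
      constructor
      · intro h; exact absurd h hge
      · intro h; exact absurd h hgf
  have := Finset.card_le_card (fun q hq => hsubf q hq)
  rw [hc3, hfil] at this
  omega

end Char

section Char2
variable {V : Type*} [Fintype V] (G : SimpleGraph V)

lemma not_share_of_far {u v x y : V} (hxy : G.Adj x y)
    (h : ¬ (x = u ∨ x = v ∨ y = u ∨ y = v)) : ¬ ShareVertex (s(x,y)) (s(u,v)) := by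
  push_neg at h
  rintro ⟨t, ht1, ht2⟩
  rw [Sym2.mem_iff] at ht1 ht2
  obtain ⟨h1, h2, h3, h4⟩ := h
  rcases ht1 with rfl | rfl <;> rcases ht2 with rfl | rfl <;> simp_all

lemma triple_indep {u v w x y : V} (h : Cherry G u v w) (hxy : G.Adj x y)
    (hx : ¬ (x = u ∨ x = v ∨ x = w)) (hy : ¬ (y = u ∨ y = v ∨ y = w)) :
    IsOneNearlyEdgeIndep G {s(u,v), s(v,w), s(x,y)} ∧
      ({s(u,v), s(v,w), s(x,y)} : Finset (Sym2 V)).card = 3 := by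
  obtain ⟨huw, huv, hvw⟩ := h
  push_neg at hx hy
  have he1 : s(u,v) ≠ s(v,w) := sym2_ne_of huv.ne huw
  have he2 : s(u,v) ≠ s(x,y) := by
    intro hh; rw [Sym2.eq_iff] at hh
    rcases hh with ⟨h1, h2⟩ | ⟨h1, h2⟩ <;> simp_all
  have he3 : s(v,w) ≠ s(x,y) := by
    intro hh; rw [Sym2.eq_iff] at hh
    rcases hh with ⟨h1, h2⟩ | ⟨h1, h2⟩ <;> simp_all
  have hcard : ({s(u,v), s(v,w), s(x,y)} : Finset (Sym2 V)).card = 3 := by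
    rw [Finset.card_insert_of_notMem (by simp [he1, he2]),
      Finset.card_insert_of_notMem (by simp [he3]), Finset.card_singleton]
  refine ⟨⟨?_, ?_⟩, hcard⟩
  · intro e he
    simp only [Finset.coe_insert, Finset.coe_singleton, Set.mem_insert_iff,
      Set.mem_singleton_iff] at he
    rcases he with rfl | rfl | rfl
    · exact huv
    · exact hvw
    · exact hxy
  · have hns1 : ¬ ShareVertex (s(x,y)) (s(u,v)) :=
      not_share_of_far G hxy (by tauto)
    have hns2 : ¬ ShareVertex (s(x,y)) (s(v,w)) := by
      have := not_share_of_far G hxy (u := v) (v := w) (by tauto)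
      exact this
    have hns1' : ¬ ShareVertex (s(u,v)) (s(x,y)) := fun ⟨t, h1, h2⟩ => hns1 ⟨t, h2, h1⟩
    have hns2' : ¬ ShareVertex (s(v,w)) (s(x,y)) := fun ⟨t, h1, h2⟩ => hns2 ⟨t, h2, h1⟩
    have : ({s(u,v), s(v,w), s(x,y)} : Finset (Sym2 V)).offDiag.filter
        (fun p => ShareVertex p.1 p.2) = {(s(u,v), s(v,w)), (s(v,w), s(u,v))} := by
      ext ⟨a, b⟩
      rw [Finset.mem_filter, Finset.mem_offDiag]
      simp only [Finset.mem_insert, Finset.mem_singleton, Prod.mk.injEq]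
      constructor
      · rintro ⟨⟨(rfl | rfl | rfl), (rfl | rfl | rfl), hab⟩, hs⟩ <;>
          first
          | exact absurd rfl hab
          | exact Or.inl ⟨rfl, rfl⟩
          | exact Or.inr ⟨rfl, rfl⟩
          | exact absurd hs hns1
          | exact absurd hs hns2
          | exact absurd hs hns1'
          | exact absurd hs hns2'
      · rintro (⟨rfl, rfl⟩ | ⟨rfl, rfl⟩)
        · exact ⟨⟨by simp, by simp, he1⟩, v, by simp, by simp⟩
        · exact ⟨⟨by simp, by simp, he1.symm⟩, v, by simp, by simp⟩
    rw [this, Finset.card_insert_of_notMem (by simp [he1]), Finset.card_singleton]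

lemma edgeAlpha1_eq_two_iff : edgeAlpha1 G = 2 ↔ Good1 G ∧ Good2 G := by
  constructor
  · intro h
    have hbdd := bdd G
    have hne : {k | ∃ M : Finset (Sym2 V), IsOneNearlyEdgeIndep G M ∧ M.card = k}.Nonempty := by
      rcases Set.eq_empty_or_nonempty
        {k | ∃ M : Finset (Sym2 V), IsOneNearlyEdgeIndep G M ∧ M.card = k} with he | hne
      · exfalso; rw [edgeAlpha1, he] at h; simp at h
      · exact hne
    constructor
    · -- Good1
      have hmem : edgeAlpha1 G ∈ {k | ∃ M : Finset (Sym2 V), IsOneNearlyEdgeIndep G M ∧ M.card = k} :=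
        Nat.sSup_mem hne hbdd
      rw [h] at hmem
      obtain ⟨M, ⟨hsub, hfil⟩, hMcard⟩ := hmem
      have : (M.offDiag.filter fun p => ShareVertex p.1 p.2).Nonempty := by
        rw [← Finset.card_pos, hfil]; norm_num
      obtain ⟨⟨e, f⟩, hp⟩ := this
      rw [Finset.mem_filter, Finset.mem_offDiag] at hp
      obtain ⟨⟨heM, hfM, hef⟩, vv, hve, hvf⟩ := hp
      obtain ⟨u, he⟩ := mem_sym2_iff.mp hve
      obtain ⟨w, hf⟩ := mem_sym2_iff.mp hvf
      rw [he] at heM hef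
      rw [hf] at hfM hef
      have hadjvu : G.Adj vv u := (G.mem_edgeSet).mp (hsub heM)
      have hadjvw : G.Adj vv w := (G.mem_edgeSet).mp (hsub hfM)
      have huw : u ≠ w := fun hh => hef (by rw [hh])
      exact ⟨u, vv, w, huw, hadjvu.symm, hadjvw⟩
    · -- Good2
      intro u v w x y hch hxy
      by_contra hcon
      push_neg at hcon
      obtain ⟨h1, h2, h3, h4, h5, h6⟩ := hcon
      obtain ⟨hind, hcard⟩ := triple_indep G hch hxy (by tauto) (by tauto)
      have h3mem : 3 ∈ {k | ∃ M : Finset (Sym2 V), IsOneNearlyEdgeIndep G M ∧ M.card = k} :=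
        ⟨_, hind, hcard⟩
      have hle := le_csSup hbdd h3mem
      have h' : sSup {k | ∃ M : Finset (Sym2 V), IsOneNearlyEdgeIndep G M ∧ M.card = k} = 2 := h
      omega
  · rintro ⟨⟨u, v, w, hch⟩, hg2⟩
    obtain ⟨hind, hcard⟩ := pair_indep G hch
    have h2mem : 2 ∈ {k | ∃ M : Finset (Sym2 V), IsOneNearlyEdgeIndep G M ∧ M.card = k} :=
      ⟨_, hind, hcard⟩
    apply le_antisymm
    · apply csSup_le ⟨2, h2mem⟩
      rintro k ⟨M, hM, rfl⟩
      exact card_le_two_of_good2 G hg2 M hM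
    · exact le_csSup (bdd G) h2mem

end Char2

section G4
def adj4 (b01 b02 b03 b12 b13 b23 : Bool) (a b : Fin 4) : Bool :=
  (decide (a.val = 0 ∧ b.val = 1 ∨ a.val = 1 ∧ b.val = 0) && b01) ||
  (decide (a.val = 0 ∧ b.val = 2 ∨ a.val = 2 ∧ b.val = 0) && b02) ||
  (decide (a.val = 0 ∧ b.val = 3 ∨ a.val = 3 ∧ b.val = 0) && b03) ||
  (decide (a.val = 1 ∧ b.val = 2 ∨ a.val = 2 ∧ b.val = 1) && b12) ||
  (decide (a.val = 1 ∧ b.val = 3 ∨ a.val = 3 ∧ b.val = 1) && b13) ||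
  (decide (a.val = 2 ∧ b.val = 3 ∨ a.val = 3 ∧ b.val = 2) && b23)

def gOf4 (b01 b02 b03 b12 b13 b23 : Bool) : SimpleGraph (Fin 4) where
  Adj a b := adj4 b01 b02 b03 b12 b13 b23 a b = true
  symm := by
    refine ⟨fun a b => ?_⟩
    fin_cases a <;> fin_cases b <;> simp [adj4]
  loopless := by
    refine ⟨fun a => ?_⟩
    fin_cases a <;> simp [adj4]

instance gOf4.decAdj (b01 b02 b03 b12 b13 b23 : Bool) :
    DecidableRel (gOf4 b01 b02 b03 b12 b13 b23).Adj :=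
  fun a b => inferInstanceAs (Decidable (adj4 b01 b02 b03 b12 b13 b23 a b = true))

lemma eq_gOf4 (H : SimpleGraph (Fin 4)) (b01 b02 b03 b12 b13 b23 : Bool)
    (h01 : H.Adj 0 1 ↔ b01 = true) (h02 : H.Adj 0 2 ↔ b02 = true)
    (h03 : H.Adj 0 3 ↔ b03 = true) (h12 : H.Adj 1 2 ↔ b12 = true)
    (h13 : H.Adj 1 3 ↔ b13 = true) (h23 : H.Adj 2 3 ↔ b23 = true) :
    H = gOf4 b01 b02 b03 b12 b13 b23 := by
  have h10 : H.Adj 1 0 ↔ b01 = true := by rw [SimpleGraph.adj_comm]; exact h01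
  have h20 : H.Adj 2 0 ↔ b02 = true := by rw [SimpleGraph.adj_comm]; exact h02
  have h30 : H.Adj 3 0 ↔ b03 = true := by rw [SimpleGraph.adj_comm]; exact h03
  have h21 : H.Adj 2 1 ↔ b12 = true := by rw [SimpleGraph.adj_comm]; exact h12
  have h31 : H.Adj 3 1 ↔ b13 = true := by rw [SimpleGraph.adj_comm]; exact h13
  have h32 : H.Adj 3 2 ↔ b23 = true := by rw [SimpleGraph.adj_comm]; exact h23
  ext a b
  show H.Adj a b ↔ adj4 b01 b02 b03 b12 b13 b23 a b = true
  fin_cases a <;> fin_cases b <;>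
    simp only [adj4, Bool.or_eq_true, Bool.and_eq_true, decide_eq_true_eq] <;>
    simp_all [SimpleGraph.irrefl]
end G4

section Targets
open SimpleGraph

lemma cycle4_eq : SimpleGraph.cycleGraph 4 = gOf4 true false true true false true := by
  apply eq_gOf4 <;> decide

lemma top_eq : (⊤ : SimpleGraph (Fin 4)) = gOf4 true true true true true true := by
  apply eq_gOf4 <;> decide

lemma diamond_eq : diamondGraph = gOf4 false true true true true true := by
  apply eq_gOf4 <;> simp [diamondGraph, Sym2.eq_iff] <;> decide

lemma u13_eq : U13 = gOf4 true true true true false false := by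
  apply eq_gOf4 <;> simp [U13, Sym2.eq_iff] <;> decide

lemma path4_eq : SimpleGraph.pathGraph 4 = gOf4 true false false true false true := by
  apply eq_gOf4 <;> simp [SimpleGraph.pathGraph_adj] <;> decide

lemma star4_eq : _root_.starGraph 4 = gOf4 true true true false false false := by
  apply eq_gOf4 <;> simp only [_root_.starGraph] <;> decide

lemma nonempty_iso_of {m : ℕ} {A B : SimpleGraph (Fin m)}
    (h : ∃ e : Fin m ≃ Fin m, ∀ a b, B.Adj (e a) (e b) ↔ A.Adj a b) : Nonempty (A ≃g B) :=
  ⟨{ toEquiv := h.choose, map_rel_iff' := h.choose_spec _ _ }⟩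

lemma not_conn {m : ℕ} (H : SimpleGraph (Fin m)) (p : Fin m → Bool) (z0 v : Fin m)
    (h0 : p z0 = true) (hv : p v = false)
    (hcl : ∀ a b, H.Adj a b → p a = true → p b = true) (hc : H.Connected) : False := by
  obtain ⟨w⟩ := hc.preconnected z0 v
  have : ∀ {a b : Fin m} (_ : H.Walk a b), p a = true → p b = true := by
    intro a b w
    induction w with
    | nil => exact id
    | cons h q ih => exact fun ha => ih (hcl _ _ h ha)
  have := this w h0
  rw [hv] at this
  exact Bool.false_ne_true this
end Targets


def adj3 (b01 b02 b12 : Bool) (a b : Fin 3) : Bool :=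
  (decide (a.val = 0 ∧ b.val = 1 ∨ a.val = 1 ∧ b.val = 0) && b01) ||
  (decide (a.val = 0 ∧ b.val = 2 ∨ a.val = 2 ∧ b.val = 0) && b02) ||
  (decide (a.val = 1 ∧ b.val = 2 ∨ a.val = 2 ∧ b.val = 1) && b12)

def gOf3 (b01 b02 b12 : Bool) : SimpleGraph (Fin 3) where
  Adj a b := adj3 b01 b02 b12 a b = true
  symm := by refine ⟨fun a b => ?_⟩; fin_cases a <;> fin_cases b <;> simp [adj3]
  loopless := by refine ⟨fun a => ?_⟩; fin_cases a <;> simp [adj3]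

instance gOf3.decAdj (b01 b02 b12 : Bool) : DecidableRel (gOf3 b01 b02 b12).Adj :=
  fun a b => inferInstanceAs (Decidable (adj3 b01 b02 b12 a b = true))

lemma eq_gOf3 (H : SimpleGraph (Fin 3)) (b01 b02 b12 : Bool)
    (h01 : H.Adj 0 1 ↔ b01 = true) (h02 : H.Adj 0 2 ↔ b02 = true)
    (h12 : H.Adj 1 2 ↔ b12 = true) : H = gOf3 b01 b02 b12 := by
  have h10 : H.Adj 1 0 ↔ b01 = true := by rw [SimpleGraph.adj_comm]; exact h01
  have h20 : H.Adj 2 0 ↔ b02 = true := by rw [SimpleGraph.adj_comm]; exact h02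
  have h21 : H.Adj 2 1 ↔ b12 = true := by rw [SimpleGraph.adj_comm]; exact h12
  ext a b
  show H.Adj a b ↔ adj3 b01 b02 b12 a b = true
  fin_cases a <;> fin_cases b <;>
    simp only [adj3, Bool.or_eq_true, Bool.and_eq_true, decide_eq_true_eq] <;>
    simp_all [SimpleGraph.irrefl]

lemma cycle3_eq : SimpleGraph.cycleGraph 3 = gOf3 true true true := by
  apply eq_gOf3 <;> decide

lemma star3_eq : _root_.starGraph 3 = gOf3 true true false := by
  apply eq_gOf3 <;> simp only [_root_.starGraph] <;> decide


lemma classify3 (H : SimpleGraph (Fin 3)) (hconn : H.Connected) :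
    Nonempty (H ≃g SimpleGraph.cycleGraph 3) ∨ Nonempty (H ≃g _root_.starGraph 3) := by
  rw [cycle3_eq, star3_eq]
  by_cases h01 : H.Adj 0 1 <;> by_cases h02 : H.Adj 0 2 <;> by_cases h12 : H.Adj 1 2
  · have hH : H = gOf3 true true true := eq_gOf3 H _ _ _ (by simp [h01]) (by simp [h02]) (by simp [h12])
    subst hH
    exact Or.inl (nonempty_iso_of (by decide))
  · have hH : H = gOf3 true true false := eq_gOf3 H _ _ _ (by simp [h01]) (by simp [h02]) (by simp [h12])
    subst hH
    exact Or.inr (nonempty_iso_of (by decide))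
  · have hH : H = gOf3 true false true := eq_gOf3 H _ _ _ (by simp [h01]) (by simp [h02]) (by simp [h12])
    subst hH
    exact Or.inr (nonempty_iso_of (by decide))
  · have hH : H = gOf3 true false false := eq_gOf3 H _ _ _ (by simp [h01]) (by simp [h02]) (by simp [h12])
    subst hH
    exact absurd hconn (fun hc => not_conn _ ![true, true, false] 0 2 (by decide) (by decide) (by decide) hc)
  · have hH : H = gOf3 false true true := eq_gOf3 H _ _ _ (by simp [h01]) (by simp [h02]) (by simp [h12])
    subst hH
    exact Or.inr (nonempty_iso_of (by decide))
  · have hH : H = gOf3 false true false := eq_gOf3 H _ _ _ (by simp [h01]) (by simp [h02]) (by simp [h12])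
    subst hH
    exact absurd hconn (fun hc => not_conn _ ![true, false, true] 0 1 (by decide) (by decide) (by decide) hc)
  · have hH : H = gOf3 false false true := eq_gOf3 H _ _ _ (by simp [h01]) (by simp [h02]) (by simp [h12])
    subst hH
    exact absurd hconn (fun hc => not_conn _ ![true, false, false] 0 1 (by decide) (by decide) (by decide) hc)
  · have hH : H = gOf3 false false false := eq_gOf3 H _ _ _ (by simp [h01]) (by simp [h02]) (by simp [h12])
    subst hH
    exact absurd hconn (fun hc => not_conn _ ![true, false, false] 0 1 (by decide) (by decide) (by decide) hc)

lemma classify4 (H : SimpleGraph (Fin 4)) (hconn : H.Connected) :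
    Nonempty (H ≃g SimpleGraph.cycleGraph 4) ∨ Nonempty (H ≃g diamondGraph) ∨
    Nonempty (H ≃g (⊤ : SimpleGraph (Fin 4))) ∨ Nonempty (H ≃g U13) ∨
    Nonempty (H ≃g SimpleGraph.pathGraph 4) ∨ Nonempty (H ≃g _root_.starGraph 4) := by
  rw [cycle4_eq, diamond_eq, top_eq, u13_eq, path4_eq, star4_eq]
  by_cases h01 : H.Adj 0 1 <;> by_cases h02 : H.Adj 0 2 <;> by_cases h03 : H.Adj 0 3 <;>
    by_cases h12 : H.Adj 1 2 <;> by_cases h13 : H.Adj 1 3 <;> by_cases h23 : H.Adj 2 3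
  · have hH : H = gOf4 true true true true true true := eq_gOf4 H _ _ _ _ _ _ (by simp [h01]) (by simp [h02]) (by simp [h03]) (by simp [h12]) (by simp [h13]) (by simp [h23])
    subst hH
    exact Or.inr (Or.inr (Or.inl (nonempty_iso_of (by decide))))
  · have hH : H = gOf4 true true true true true false := eq_gOf4 H _ _ _ _ _ _ (by simp [h01]) (by simp [h02]) (by simp [h03]) (by simp [h12]) (by simp [h13]) (by simp [h23])
    subst hH
    exact Or.inr (Or.inl (nonempty_iso_of (by decide)))
  · have hH : H = gOf4 true true true true false true := eq_gOf4 H _ _ _ _ _ _ (by simp [h01]) (by simp [h02]) (by simp [h03]) (by simp [h12]) (by simp [h13]) (by simp [h23])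
    subst hH
    exact Or.inr (Or.inl (nonempty_iso_of (by decide)))
  · have hH : H = gOf4 true true true true false false := eq_gOf4 H _ _ _ _ _ _ (by simp [h01]) (by simp [h02]) (by simp [h03]) (by simp [h12]) (by simp [h13]) (by simp [h23])
    subst hH
    exact Or.inr (Or.inr (Or.inr (Or.inl (nonempty_iso_of (by decide)))))
  · have hH : H = gOf4 true true true false true true := eq_gOf4 H _ _ _ _ _ _ (by simp [h01]) (by simp [h02]) (by simp [h03]) (by simp [h12]) (by simp [h13]) (by simp [h23])
    subst hH
    exact Or.inr (Or.inl (nonempty_iso_of (by decide)))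
  · have hH : H = gOf4 true true true false true false := eq_gOf4 H _ _ _ _ _ _ (by simp [h01]) (by simp [h02]) (by simp [h03]) (by simp [h12]) (by simp [h13]) (by simp [h23])
    subst hH
    exact Or.inr (Or.inr (Or.inr (Or.inl (nonempty_iso_of (by decide)))))
  · have hH : H = gOf4 true true true false false true := eq_gOf4 H _ _ _ _ _ _ (by simp [h01]) (by simp [h02]) (by simp [h03]) (by simp [h12]) (by simp [h13]) (by simp [h23])
    subst hH
    exact Or.inr (Or.inr (Or.inr (Or.inl (nonempty_iso_of (by decide)))))
  · have hH : H = gOf4 true true true false false false := eq_gOf4 H _ _ _ _ _ _ (by simp [h01]) (by simp [h02]) (by simp [h03]) (by simp [h12]) (by simp [h13]) (by simp [h23])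
    subst hH
    exact Or.inr (Or.inr (Or.inr (Or.inr (Or.inr (nonempty_iso_of (by decide))))))
  · have hH : H = gOf4 true true false true true true := eq_gOf4 H _ _ _ _ _ _ (by simp [h01]) (by simp [h02]) (by simp [h03]) (by simp [h12]) (by simp [h13]) (by simp [h23])
    subst hH
    exact Or.inr (Or.inl (nonempty_iso_of (by decide)))
  · have hH : H = gOf4 true true false true true false := eq_gOf4 H _ _ _ _ _ _ (by simp [h01]) (by simp [h02]) (by simp [h03]) (by simp [h12]) (by simp [h13]) (by simp [h23])
    subst hH
    exact Or.inr (Or.inr (Or.inr (Or.inl (nonempty_iso_of (by decide)))))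
  · have hH : H = gOf4 true true false true false true := eq_gOf4 H _ _ _ _ _ _ (by simp [h01]) (by simp [h02]) (by simp [h03]) (by simp [h12]) (by simp [h13]) (by simp [h23])
    subst hH
    exact Or.inr (Or.inr (Or.inr (Or.inl (nonempty_iso_of (by decide)))))
  · have hH : H = gOf4 true true false true false false := eq_gOf4 H _ _ _ _ _ _ (by simp [h01]) (by simp [h02]) (by simp [h03]) (by simp [h12]) (by simp [h13]) (by simp [h23])
    subst hH
    exact absurd hconn (fun hc => not_conn _ ![true, true, true, false] 0 3 (by decide) (by decide) (by decide) hc)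
  · have hH : H = gOf4 true true false false true true := eq_gOf4 H _ _ _ _ _ _ (by simp [h01]) (by simp [h02]) (by simp [h03]) (by simp [h12]) (by simp [h13]) (by simp [h23])
    subst hH
    exact Or.inl (nonempty_iso_of (by decide))
  · have hH : H = gOf4 true true false false true false := eq_gOf4 H _ _ _ _ _ _ (by simp [h01]) (by simp [h02]) (by simp [h03]) (by simp [h12]) (by simp [h13]) (by simp [h23])
    subst hH
    exact Or.inr (Or.inr (Or.inr (Or.inr (Or.inl (nonempty_iso_of (by decide))))))
  · have hH : H = gOf4 true true false false false true := eq_gOf4 H _ _ _ _ _ _ (by simp [h01]) (by simp [h02]) (by simp [h03]) (by simp [h12]) (by simp [h13]) (by simp [h23])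
    subst hH
    exact Or.inr (Or.inr (Or.inr (Or.inr (Or.inl (nonempty_iso_of (by decide))))))
  · have hH : H = gOf4 true true false false false false := eq_gOf4 H _ _ _ _ _ _ (by simp [h01]) (by simp [h02]) (by simp [h03]) (by simp [h12]) (by simp [h13]) (by simp [h23])
    subst hH
    exact absurd hconn (fun hc => not_conn _ ![true, true, true, false] 0 3 (by decide) (by decide) (by decide) hc)
  · have hH : H = gOf4 true false true true true true := eq_gOf4 H _ _ _ _ _ _ (by simp [h01]) (by simp [h02]) (by simp [h03]) (by simp [h12]) (by simp [h13]) (by simp [h23])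
    subst hH
    exact Or.inr (Or.inl (nonempty_iso_of (by decide)))
  · have hH : H = gOf4 true false true true true false := eq_gOf4 H _ _ _ _ _ _ (by simp [h01]) (by simp [h02]) (by simp [h03]) (by simp [h12]) (by simp [h13]) (by simp [h23])
    subst hH
    exact Or.inr (Or.inr (Or.inr (Or.inl (nonempty_iso_of (by decide)))))
  · have hH : H = gOf4 true false true true false true := eq_gOf4 H _ _ _ _ _ _ (by simp [h01]) (by simp [h02]) (by simp [h03]) (by simp [h12]) (by simp [h13]) (by simp [h23])
    subst hH
    exact Or.inl (nonempty_iso_of (by decide))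
  · have hH : H = gOf4 true false true true false false := eq_gOf4 H _ _ _ _ _ _ (by simp [h01]) (by simp [h02]) (by simp [h03]) (by simp [h12]) (by simp [h13]) (by simp [h23])
    subst hH
    exact Or.inr (Or.inr (Or.inr (Or.inr (Or.inl (nonempty_iso_of (by decide))))))
  · have hH : H = gOf4 true false true false true true := eq_gOf4 H _ _ _ _ _ _ (by simp [h01]) (by simp [h02]) (by simp [h03]) (by simp [h12]) (by simp [h13]) (by simp [h23])
    subst hH
    exact Or.inr (Or.inr (Or.inr (Or.inl (nonempty_iso_of (by decide)))))
  · have hH : H = gOf4 true false true false true false := eq_gOf4 H _ _ _ _ _ _ (by simp [h01]) (by simp [h02]) (by simp [h03]) (by simp [h12]) (by simp [h13]) (by simp [h23])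
    subst hH
    exact absurd hconn (fun hc => not_conn _ ![true, true, false, true] 0 2 (by decide) (by decide) (by decide) hc)
  · have hH : H = gOf4 true false true false false true := eq_gOf4 H _ _ _ _ _ _ (by simp [h01]) (by simp [h02]) (by simp [h03]) (by simp [h12]) (by simp [h13]) (by simp [h23])
    subst hH
    exact Or.inr (Or.inr (Or.inr (Or.inr (Or.inl (nonempty_iso_of (by decide))))))
  · have hH : H = gOf4 true false true false false false := eq_gOf4 H _ _ _ _ _ _ (by simp [h01]) (by simp [h02]) (by simp [h03]) (by simp [h12]) (by simp [h13]) (by simp [h23])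
    subst hH
    exact absurd hconn (fun hc => not_conn _ ![true, true, false, true] 0 2 (by decide) (by decide) (by decide) hc)
  · have hH : H = gOf4 true false false true true true := eq_gOf4 H _ _ _ _ _ _ (by simp [h01]) (by simp [h02]) (by simp [h03]) (by simp [h12]) (by simp [h13]) (by simp [h23])
    subst hH
    exact Or.inr (Or.inr (Or.inr (Or.inl (nonempty_iso_of (by decide)))))
  · have hH : H = gOf4 true false false true true false := eq_gOf4 H _ _ _ _ _ _ (by simp [h01]) (by simp [h02]) (by simp [h03]) (by simp [h12]) (by simp [h13]) (by simp [h23])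
    subst hH
    exact Or.inr (Or.inr (Or.inr (Or.inr (Or.inr (nonempty_iso_of (by decide))))))
  · have hH : H = gOf4 true false false true false true := eq_gOf4 H _ _ _ _ _ _ (by simp [h01]) (by simp [h02]) (by simp [h03]) (by simp [h12]) (by simp [h13]) (by simp [h23])
    subst hH
    exact Or.inr (Or.inr (Or.inr (Or.inr (Or.inl (nonempty_iso_of (by decide))))))
  · have hH : H = gOf4 true false false true false false := eq_gOf4 H _ _ _ _ _ _ (by simp [h01]) (by simp [h02]) (by simp [h03]) (by simp [h12]) (by simp [h13]) (by simp [h23])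
    subst hH
    exact absurd hconn (fun hc => not_conn _ ![true, true, true, false] 0 3 (by decide) (by decide) (by decide) hc)
  · have hH : H = gOf4 true false false false true true := eq_gOf4 H _ _ _ _ _ _ (by simp [h01]) (by simp [h02]) (by simp [h03]) (by simp [h12]) (by simp [h13]) (by simp [h23])
    subst hH
    exact Or.inr (Or.inr (Or.inr (Or.inr (Or.inl (nonempty_iso_of (by decide))))))
  · have hH : H = gOf4 true false false false true false := eq_gOf4 H _ _ _ _ _ _ (by simp [h01]) (by simp [h02]) (by simp [h03]) (by simp [h12]) (by simp [h13]) (by simp [h23])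
    subst hH
    exact absurd hconn (fun hc => not_conn _ ![true, true, false, true] 0 2 (by decide) (by decide) (by decide) hc)
  · have hH : H = gOf4 true false false false false true := eq_gOf4 H _ _ _ _ _ _ (by simp [h01]) (by simp [h02]) (by simp [h03]) (by simp [h12]) (by simp [h13]) (by simp [h23])
    subst hH
    exact absurd hconn (fun hc => not_conn _ ![true, true, false, false] 0 2 (by decide) (by decide) (by decide) hc)
  · have hH : H = gOf4 true false false false false false := eq_gOf4 H _ _ _ _ _ _ (by simp [h01]) (by simp [h02]) (by simp [h03]) (by simp [h12]) (by simp [h13]) (by simp [h23])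
    subst hH
    exact absurd hconn (fun hc => not_conn _ ![true, true, false, false] 0 2 (by decide) (by decide) (by decide) hc)
  · have hH : H = gOf4 false true true true true true := eq_gOf4 H _ _ _ _ _ _ (by simp [h01]) (by simp [h02]) (by simp [h03]) (by simp [h12]) (by simp [h13]) (by simp [h23])
    subst hH
    exact Or.inr (Or.inl (nonempty_iso_of (by decide)))
  · have hH : H = gOf4 false true true true true false := eq_gOf4 H _ _ _ _ _ _ (by simp [h01]) (by simp [h02]) (by simp [h03]) (by simp [h12]) (by simp [h13]) (by simp [h23])
    subst hH
    exact Or.inl (nonempty_iso_of (by decide))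
  · have hH : H = gOf4 false true true true false true := eq_gOf4 H _ _ _ _ _ _ (by simp [h01]) (by simp [h02]) (by simp [h03]) (by simp [h12]) (by simp [h13]) (by simp [h23])
    subst hH
    exact Or.inr (Or.inr (Or.inr (Or.inl (nonempty_iso_of (by decide)))))
  · have hH : H = gOf4 false true true true false false := eq_gOf4 H _ _ _ _ _ _ (by simp [h01]) (by simp [h02]) (by simp [h03]) (by simp [h12]) (by simp [h13]) (by simp [h23])
    subst hH
    exact Or.inr (Or.inr (Or.inr (Or.inr (Or.inl (nonempty_iso_of (by decide))))))
  · have hH : H = gOf4 false true true false true true := eq_gOf4 H _ _ _ _ _ _ (by simp [h01]) (by simp [h02]) (by simp [h03]) (by simp [h12]) (by simp [h13]) (by simp [h23])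
    subst hH
    exact Or.inr (Or.inr (Or.inr (Or.inl (nonempty_iso_of (by decide)))))
  · have hH : H = gOf4 false true true false true false := eq_gOf4 H _ _ _ _ _ _ (by simp [h01]) (by simp [h02]) (by simp [h03]) (by simp [h12]) (by simp [h13]) (by simp [h23])
    subst hH
    exact Or.inr (Or.inr (Or.inr (Or.inr (Or.inl (nonempty_iso_of (by decide))))))
  · have hH : H = gOf4 false true true false false true := eq_gOf4 H _ _ _ _ _ _ (by simp [h01]) (by simp [h02]) (by simp [h03]) (by simp [h12]) (by simp [h13]) (by simp [h23])
    subst hH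
    exact absurd hconn (fun hc => not_conn _ ![true, false, true, true] 0 1 (by decide) (by decide) (by decide) hc)
  · have hH : H = gOf4 false true true false false false := eq_gOf4 H _ _ _ _ _ _ (by simp [h01]) (by simp [h02]) (by simp [h03]) (by simp [h12]) (by simp [h13]) (by simp [h23])
    subst hH
    exact absurd hconn (fun hc => not_conn _ ![true, false, true, true] 0 1 (by decide) (by decide) (by decide) hc)
  · have hH : H = gOf4 false true false true true true := eq_gOf4 H _ _ _ _ _ _ (by simp [h01]) (by simp [h02]) (by simp [h03]) (by simp [h12]) (by simp [h13]) (by simp [h23])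
    subst hH
    exact Or.inr (Or.inr (Or.inr (Or.inl (nonempty_iso_of (by decide)))))
  · have hH : H = gOf4 false true false true true false := eq_gOf4 H _ _ _ _ _ _ (by simp [h01]) (by simp [h02]) (by simp [h03]) (by simp [h12]) (by simp [h13]) (by simp [h23])
    subst hH
    exact Or.inr (Or.inr (Or.inr (Or.inr (Or.inl (nonempty_iso_of (by decide))))))
  · have hH : H = gOf4 false true false true false true := eq_gOf4 H _ _ _ _ _ _ (by simp [h01]) (by simp [h02]) (by simp [h03]) (by simp [h12]) (by simp [h13]) (by simp [h23])
    subst hH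
    exact Or.inr (Or.inr (Or.inr (Or.inr (Or.inr (nonempty_iso_of (by decide))))))
  · have hH : H = gOf4 false true false true false false := eq_gOf4 H _ _ _ _ _ _ (by simp [h01]) (by simp [h02]) (by simp [h03]) (by simp [h12]) (by simp [h13]) (by simp [h23])
    subst hH
    exact absurd hconn (fun hc => not_conn _ ![true, true, true, false] 0 3 (by decide) (by decide) (by decide) hc)
  · have hH : H = gOf4 false true false false true true := eq_gOf4 H _ _ _ _ _ _ (by simp [h01]) (by simp [h02]) (by simp [h03]) (by simp [h12]) (by simp [h13]) (by simp [h23])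
    subst hH
    exact Or.inr (Or.inr (Or.inr (Or.inr (Or.inl (nonempty_iso_of (by decide))))))
  · have hH : H = gOf4 false true false false true false := eq_gOf4 H _ _ _ _ _ _ (by simp [h01]) (by simp [h02]) (by simp [h03]) (by simp [h12]) (by simp [h13]) (by simp [h23])
    subst hH
    exact absurd hconn (fun hc => not_conn _ ![true, false, true, false] 0 1 (by decide) (by decide) (by decide) hc)
  · have hH : H = gOf4 false true false false false true := eq_gOf4 H _ _ _ _ _ _ (by simp [h01]) (by simp [h02]) (by simp [h03]) (by simp [h12]) (by simp [h13]) (by simp [h23])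
    subst hH
    exact absurd hconn (fun hc => not_conn _ ![true, false, true, true] 0 1 (by decide) (by decide) (by decide) hc)
  · have hH : H = gOf4 false true false false false false := eq_gOf4 H _ _ _ _ _ _ (by simp [h01]) (by simp [h02]) (by simp [h03]) (by simp [h12]) (by simp [h13]) (by simp [h23])
    subst hH
    exact absurd hconn (fun hc => not_conn _ ![true, false, true, false] 0 1 (by decide) (by decide) (by decide) hc)
  · have hH : H = gOf4 false false true true true true := eq_gOf4 H _ _ _ _ _ _ (by simp [h01]) (by simp [h02]) (by simp [h03]) (by simp [h12]) (by simp [h13]) (by simp [h23])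
    subst hH
    exact Or.inr (Or.inr (Or.inr (Or.inl (nonempty_iso_of (by decide)))))
  · have hH : H = gOf4 false false true true true false := eq_gOf4 H _ _ _ _ _ _ (by simp [h01]) (by simp [h02]) (by simp [h03]) (by simp [h12]) (by simp [h13]) (by simp [h23])
    subst hH
    exact Or.inr (Or.inr (Or.inr (Or.inr (Or.inl (nonempty_iso_of (by decide))))))
  · have hH : H = gOf4 false false true true false true := eq_gOf4 H _ _ _ _ _ _ (by simp [h01]) (by simp [h02]) (by simp [h03]) (by simp [h12]) (by simp [h13]) (by simp [h23])
    subst hH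
    exact Or.inr (Or.inr (Or.inr (Or.inr (Or.inl (nonempty_iso_of (by decide))))))
  · have hH : H = gOf4 false false true true false false := eq_gOf4 H _ _ _ _ _ _ (by simp [h01]) (by simp [h02]) (by simp [h03]) (by simp [h12]) (by simp [h13]) (by simp [h23])
    subst hH
    exact absurd hconn (fun hc => not_conn _ ![true, false, false, true] 0 1 (by decide) (by decide) (by decide) hc)
  · have hH : H = gOf4 false false true false true true := eq_gOf4 H _ _ _ _ _ _ (by simp [h01]) (by simp [h02]) (by simp [h03]) (by simp [h12]) (by simp [h13]) (by simp [h23])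
    subst hH
    exact Or.inr (Or.inr (Or.inr (Or.inr (Or.inr (nonempty_iso_of (by decide))))))
  · have hH : H = gOf4 false false true false true false := eq_gOf4 H _ _ _ _ _ _ (by simp [h01]) (by simp [h02]) (by simp [h03]) (by simp [h12]) (by simp [h13]) (by simp [h23])
    subst hH
    exact absurd hconn (fun hc => not_conn _ ![true, true, false, true] 0 2 (by decide) (by decide) (by decide) hc)
  · have hH : H = gOf4 false false true false false true := eq_gOf4 H _ _ _ _ _ _ (by simp [h01]) (by simp [h02]) (by simp [h03]) (by simp [h12]) (by simp [h13]) (by simp [h23])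
    subst hH
    exact absurd hconn (fun hc => not_conn _ ![true, false, true, true] 0 1 (by decide) (by decide) (by decide) hc)
  · have hH : H = gOf4 false false true false false false := eq_gOf4 H _ _ _ _ _ _ (by simp [h01]) (by simp [h02]) (by simp [h03]) (by simp [h12]) (by simp [h13]) (by simp [h23])
    subst hH
    exact absurd hconn (fun hc => not_conn _ ![true, false, false, true] 0 1 (by decide) (by decide) (by decide) hc)
  · have hH : H = gOf4 false false false true true true := eq_gOf4 H _ _ _ _ _ _ (by simp [h01]) (by simp [h02]) (by simp [h03]) (by simp [h12]) (by simp [h13]) (by simp [h23])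
    subst hH
    exact absurd hconn (fun hc => not_conn _ ![true, false, false, false] 0 1 (by decide) (by decide) (by decide) hc)
  · have hH : H = gOf4 false false false true true false := eq_gOf4 H _ _ _ _ _ _ (by simp [h01]) (by simp [h02]) (by simp [h03]) (by simp [h12]) (by simp [h13]) (by simp [h23])
    subst hH
    exact absurd hconn (fun hc => not_conn _ ![true, false, false, false] 0 1 (by decide) (by decide) (by decide) hc)
  · have hH : H = gOf4 false false false true false true := eq_gOf4 H _ _ _ _ _ _ (by simp [h01]) (by simp [h02]) (by simp [h03]) (by simp [h12]) (by simp [h13]) (by simp [h23])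
    subst hH
    exact absurd hconn (fun hc => not_conn _ ![true, false, false, false] 0 1 (by decide) (by decide) (by decide) hc)
  · have hH : H = gOf4 false false false true false false := eq_gOf4 H _ _ _ _ _ _ (by simp [h01]) (by simp [h02]) (by simp [h03]) (by simp [h12]) (by simp [h13]) (by simp [h23])
    subst hH
    exact absurd hconn (fun hc => not_conn _ ![true, false, false, false] 0 1 (by decide) (by decide) (by decide) hc)
  · have hH : H = gOf4 false false false false true true := eq_gOf4 H _ _ _ _ _ _ (by simp [h01]) (by simp [h02]) (by simp [h03]) (by simp [h12]) (by simp [h13]) (by simp [h23])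
    subst hH
    exact absurd hconn (fun hc => not_conn _ ![true, false, false, false] 0 1 (by decide) (by decide) (by decide) hc)
  · have hH : H = gOf4 false false false false true false := eq_gOf4 H _ _ _ _ _ _ (by simp [h01]) (by simp [h02]) (by simp [h03]) (by simp [h12]) (by simp [h13]) (by simp [h23])
    subst hH
    exact absurd hconn (fun hc => not_conn _ ![true, false, false, false] 0 1 (by decide) (by decide) (by decide) hc)
  · have hH : H = gOf4 false false false false false true := eq_gOf4 H _ _ _ _ _ _ (by simp [h01]) (by simp [h02]) (by simp [h03]) (by simp [h12]) (by simp [h13]) (by simp [h23])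
    subst hH
    exact absurd hconn (fun hc => not_conn _ ![true, false, false, false] 0 1 (by decide) (by decide) (by decide) hc)
  · have hH : H = gOf4 false false false false false false := eq_gOf4 H _ _ _ _ _ _ (by simp [h01]) (by simp [h02]) (by simp [h03]) (by simp [h12]) (by simp [h13]) (by simp [h23])
    subst hH
    exact absurd hconn (fun hc => not_conn _ ![true, false, false, false] 0 1 (by decide) (by decide) (by decide) hc)

section Star
open SimpleGraph
variable {V : Type*} [Fintype V] {G : SimpleGraph V}

lemma exists_neighbor (hconn : G.Connected) (h2 : 2 ≤ Fintype.card V) (z : V) :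
    ∃ t, G.Adj z t := by
  obtain ⟨y, hy⟩ := Fintype.exists_ne_of_one_lt_card (by omega) z
  obtain ⟨w⟩ := hconn.preconnected z y
  cases w with
  | nil => exact absurd rfl hy.symm
  | cons h _ => exact ⟨_, h⟩

lemma exists_fifth (h5 : 5 ≤ Fintype.card V) (a b c d : V) :
    ∃ z, z ≠ a ∧ z ≠ b ∧ z ≠ c ∧ z ≠ d := by
  have hcard : ({a, b, c, d} : Finset V).card ≤ 4 := by
    apply (Finset.card_insert_le _ _).trans
    have : ({b, c, d} : Finset V).card ≤ 3 := by
      apply (Finset.card_insert_le _ _).trans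
      have : ({c, d} : Finset V).card ≤ 2 := by
        apply (Finset.card_insert_le _ _).trans; simp
      omega
    omega
  have : (Finset.univ \ ({a, b, c, d} : Finset V)).Nonempty := by
    rw [← Finset.card_pos, Finset.card_sdiff_of_subset (Finset.subset_univ _), Finset.card_univ]
    omega
  obtain ⟨z, hz⟩ := this
  rw [Finset.mem_sdiff] at hz
  have := hz.2
  simp only [Finset.mem_insert, Finset.mem_singleton, not_or] at this
  exact ⟨z, this.1, this.2.1, this.2.2.1, this.2.2.2⟩

/-- Given a triangle a,b,c and z₁ attached to a, contradiction with a second outside vertex. -/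
lemma tri_aux (hg2 : Good2 G) (hconn : G.Connected) (h5 : 5 ≤ Fintype.card V)
    {a b c z1 : V} (hab : G.Adj a b) (hbc : G.Adj b c) (hac : G.Adj a c)
    (hz1a : G.Adj z1 a) (hz1b : z1 ≠ b) (hz1c : z1 ≠ c) : False := by
  obtain ⟨z2, hz2a, hz2b, hz2c, hz2z1⟩ := exists_fifth h5 a b c z1
  obtain ⟨t2, ht2⟩ := exists_neighbor hconn (by omega) z2
  -- t2 ∈ {a,b,c} via cherry (a,b,c)
  have habc : t2 = a ∨ t2 = b ∨ t2 = c := by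
    have := hg2 a b c z2 t2 ⟨(G.ne_of_adj hac), hab, hbc⟩ ht2
    rcases this with h|h|h|h|h|h
    · exact absurd h hz2a
    · exact absurd h hz2b
    · exact absurd h hz2c
    · exact Or.inl h
    · exact Or.inr (Or.inl h)
    · exact Or.inr (Or.inr h)
  -- cherry (z1, a, b) : t2 ∈ {z1, a, b}
  have h1 : t2 = z1 ∨ t2 = a ∨ t2 = b := by
    have := hg2 z1 a b z2 t2 ⟨hz1b, hz1a, hab⟩ ht2
    rcases this with h|h|h|h|h|h
    · exact absurd h hz2z1
    · exact absurd h hz2a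
    · exact absurd h hz2b
    · exact Or.inl h
    · exact Or.inr (Or.inl h)
    · exact Or.inr (Or.inr h)
  -- cherry (z1, a, c) : t2 ∈ {z1, a, c}
  have h2 : t2 = z1 ∨ t2 = a ∨ t2 = c := by
    have := hg2 z1 a c z2 t2 ⟨hz1c, hz1a, hac⟩ ht2
    rcases this with h|h|h|h|h|h
    · exact absurd h hz2z1
    · exact absurd h hz2a
    · exact absurd h hz2c
    · exact Or.inl h
    · exact Or.inr (Or.inl h)
    · exact Or.inr (Or.inr h)
  have ht2z1 : t2 ≠ z1 := by
    rintro rfl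
    rcases habc with rfl|rfl|rfl
    · exact G.irrefl hz1a
    · exact hz1b rfl
    · exact hz1c rfl
  have hbne : b ≠ c := G.ne_of_adj hbc
  have ht2a : t2 = a := by
    rcases h1 with h|h|h
    · exact absurd h ht2z1
    · exact h
    · rcases h2 with h'|h'|h'
      · exact absurd h' ht2z1
      · exact h'
      · exact absurd (h ▸ h') hbne
  rw [ht2a] at ht2
  -- cherry (z1, a, z2), edge (b, c)
  have := hg2 z1 a z2 b c ⟨hz2z1.symm, hz1a, ht2.symm⟩ hbc
  rcases this with h|h|h|h|h|h
  · exact hz1b h.symm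
  · exact G.ne_of_adj hab h.symm
  · exact hz2b h.symm
  · exact hz1c h.symm
  · exact G.ne_of_adj hac h.symm
  · exact hz2c h.symm

/-- If there is an edge u-y with y ≠ v, given a cherry u-v-w, contradiction (n ≥ 5). -/
lemma aux_edge (hg2 : Good2 G) (hconn : G.Connected) (h5 : 5 ≤ Fintype.card V)
    {u v w y : V} (huv : G.Adj u v) (hvw : G.Adj v w) (huw : u ≠ w)
    (huy : G.Adj u y) (hyv : y ≠ v) : False := by
  by_cases hyw : y = w
  · -- triangle u v w with edges uv vw uw(=uy)
    subst hyw
    -- z1 outside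
    obtain ⟨z1, hz1u, hz1v, hz1w, -⟩ := exists_fifth h5 u v y u
    obtain ⟨t1, ht1⟩ := exists_neighbor hconn (by omega) z1
    -- t1 ∈ {u, v, w}
    have ht1m : t1 = u ∨ t1 = v ∨ t1 = y := by
      have := hg2 u v y z1 t1 ⟨huw, huv, hvw⟩ ht1
      rcases this with h|h|h|h|h|h
      · exact absurd h hz1u
      · exact absurd h hz1v
      · exact absurd h hz1w
      · exact Or.inl h
      · exact Or.inr (Or.inl h)
      · exact Or.inr (Or.inr h)
    rcases ht1m with rfl|rfl|rfl
    · exact tri_aux hg2 hconn h5 huv hvw huy ht1 hz1v hz1w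
    · exact tri_aux hg2 hconn h5 huv.symm huy hvw ht1 hz1u hz1w
    · exact tri_aux hg2 hconn h5 hvw.symm huv.symm huy.symm ht1 hz1v hz1u
  · -- path y-u-v-w, distinct
    have hyu : y ≠ u := (G.ne_of_adj huy).symm
    obtain ⟨z, hzy, hzu, hzv, hzw⟩ := exists_fifth h5 y u v w
    obtain ⟨t, ht⟩ := exists_neighbor hconn (by omega) z
    -- cherry (y, u, v): t ∈ {y, u, v}
    have h1 : t = y ∨ t = u ∨ t = v := by
      have := hg2 y u v z t ⟨hyv, huy.symm, huv⟩ ht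
      rcases this with h|h|h|h|h|h
      · exact absurd h hzy
      · exact absurd h hzu
      · exact absurd h hzv
      · exact Or.inl h
      · exact Or.inr (Or.inl h)
      · exact Or.inr (Or.inr h)
    -- cherry (u, v, w): t ∈ {u, v, w}
    have h2 : t = u ∨ t = v ∨ t = w := by
      have := hg2 u v w z t ⟨huw, huv, hvw⟩ ht
      rcases this with h|h|h|h|h|h
      · exact absurd h hzu
      · exact absurd h hzv
      · exact absurd h hzw
      · exact Or.inl h
      · exact Or.inr (Or.inl h)
      · exact Or.inr (Or.inr h)
    have htuv : t = u ∨ t = v := by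
      rcases h1 with h|h|h
      · rcases h2 with h'|h'|h'
        · exact Or.inl h'
        · exact Or.inr h'
        · exact absurd (h ▸ h') hyw
      · exact Or.inl h
      · exact Or.inr h
    rcases htuv with rfl|rfl
    · -- t = u: cherry (z, u, y); edge (v, w)
      have := hg2 z t y v w ⟨hzy, ht, huy⟩ hvw
      rcases this with h|h|h|h|h|h
      · exact hzv h.symm
      · exact G.ne_of_adj huv h.symm
      · exact hyv h.symm
      · exact hzw h.symm
      · exact huw h.symm
      · exact hyw h.symm
    · -- t = v: cherry (z, v, w); edge (u, y)
      have := hg2 z t w u y ⟨hzw, ht, hvw⟩ huy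
      rcases this with h|h|h|h|h|h
      · exact hzu h.symm
      · exact G.ne_of_adj huv h
      · exact huw h
      · exact hzy h.symm
      · exact hyv h
      · exact hyw h
end Star

section Final
open SimpleGraph

variable {V : Type*} [Fintype V] {G : SimpleGraph V}

lemma good2_of_card_le_four (h : Fintype.card V ≤ 4) : Good2 G := by
  rintro u v w x y ⟨huw, huv, hvw⟩ hxy
  by_contra hcon
  push_neg at hcon
  obtain ⟨h1, h2, h3, h4, h5, h6⟩ := hcon
  have hxy' := G.ne_of_adj hxy
  have huv' := G.ne_of_adj huv
  have hvw' := G.ne_of_adj hvw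
  have hc5 : ({u, v, w, x, y} : Finset V).card = 5 := by
    rw [Finset.card_insert_of_notMem (by
        simp only [Finset.mem_insert, Finset.mem_singleton]
        push_neg
        exact ⟨huv', huw, fun hh => h1 hh.symm, fun hh => h4 hh.symm⟩),
      Finset.card_insert_of_notMem (by
        simp only [Finset.mem_insert, Finset.mem_singleton]
        push_neg
        exact ⟨hvw', fun hh => h2 hh.symm, fun hh => h5 hh.symm⟩),
      Finset.card_insert_of_notMem (by
        simp only [Finset.mem_insert, Finset.mem_singleton]
        push_neg
        exact ⟨fun hh => h3 hh.symm, fun hh => h6 hh.symm⟩),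
      Finset.card_insert_of_notMem (by simpa using hxy'),
      Finset.card_singleton]
  have hle := Finset.card_le_card (Finset.subset_univ ({u, v, w, x, y} : Finset V))
  rw [hc5, Finset.card_univ] at hle
  omega

lemma good1_of_iso {W : Type*} {H : SimpleGraph W} (φ : G ≃g H) (h : Good1 H) : Good1 G := by
  obtain ⟨u, v, w, h1, h2, h3⟩ := h
  exact ⟨φ.symm u, φ.symm v, φ.symm w,
    fun hh => h1 (φ.symm.toEquiv.injective hh),
    φ.symm.map_rel_iff.mpr h2, φ.symm.map_rel_iff.mpr h3⟩

lemma good2_of_star {n : ℕ} (hn1 : 0 < n) (φ : G ≃g _root_.starGraph n) : Good2 G := by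
  have hE : ∀ x y, G.Adj x y → x = φ.symm ⟨0, hn1⟩ ∨ y = φ.symm ⟨0, hn1⟩ := by
    intro x y h
    have h2 := (φ.map_rel_iff.mpr h).2
    rcases h2 with h0 | h0
    · left
      have : φ x = ⟨0, hn1⟩ := Fin.ext h0
      rw [← this]; simp
    · right
      have : φ y = ⟨0, hn1⟩ := Fin.ext h0
      rw [← this]; simp
  rintro u v w x y ⟨-, huv, -⟩ hxy
  rcases hE u v huv with h1 | h1 <;> rcases hE x y hxy with h2 | h2
  · exact Or.inl (h2.trans h1.symm)
  · exact Or.inr (Or.inr (Or.inr (Or.inl (h2.trans h1.symm))))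
  · exact Or.inr (Or.inl (h2.trans h1.symm))
  · exact Or.inr (Or.inr (Or.inr (Or.inr (Or.inl (h2.trans h1.symm)))))

lemma star_good1 {n : ℕ} (hn : 3 ≤ n) : Good1 (_root_.starGraph n) := by
  refine ⟨⟨1, by omega⟩, ⟨0, by omega⟩, ⟨2, by omega⟩, ?_, ?_, ?_⟩
  · simp [Fin.ext_iff]
  · exact ⟨by simp [Fin.ext_iff], Or.inr rfl⟩
  · exact ⟨by simp [Fin.ext_iff], Or.inl rfl⟩

lemma star_case (hconn : G.Connected) (hg1 : Good1 G) (hg2 : Good2 G) {n : ℕ}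
    (hc : Fintype.card V = n) (h5 : 5 ≤ n) : Nonempty (G ≃g _root_.starGraph n) := by
  obtain ⟨u, v, w, huw, huv, hvw⟩ := hg1
  have h5' : 5 ≤ Fintype.card V := by omega
  have hcenter : ∀ x y, G.Adj x y → x = v ∨ y = v := by
    intro x y hxy
    by_contra hcon
    push_neg at hcon
    obtain ⟨hxv, hyv⟩ := hcon
    rcases hg2 u v w x y ⟨huw, huv, hvw⟩ hxy with h | h | h | h | h | h
    · exact aux_edge hg2 hconn h5' huv hvw huw (h ▸ hxy) hyv
    · exact hxv h
    · exact aux_edge hg2 hconn h5' hvw.symm huv.symm (Ne.symm huw) (h ▸ hxy) hyv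
    · exact aux_edge hg2 hconn h5' huv hvw huw (h ▸ hxy.symm) hxv
    · exact hyv h
    · exact aux_edge hg2 hconn h5' hvw.symm huv.symm (Ne.symm huw) (h ▸ hxy.symm) hxv
  have hadj : ∀ x, x ≠ v → G.Adj x v := by
    intro x hx
    obtain ⟨t, ht⟩ := exists_neighbor hconn (by omega) x
    rcases hcenter x t ht with rfl | rfl
    · exact absurd rfl hx
    · exact ht
  have hn0 : 0 < n := by omega
  let f := Fintype.equivFinOfCardEq hc
  let e := f.trans (Equiv.swap (f v) ⟨0, hn0⟩)
  have hev : e v = ⟨0, hn0⟩ := by simp [e, Equiv.swap_apply_left]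
  have hvz : ∀ a, e a = ⟨0, hn0⟩ ↔ a = v := by
    intro a
    constructor
    · intro h; apply e.injective; rw [h, hev]
    · rintro rfl; exact hev
  refine ⟨⟨e, ?_⟩⟩
  intro a b
  show (_root_.starGraph n).Adj (e a) (e b) ↔ G.Adj a b
  constructor
  · rintro ⟨hne, h0⟩
    have hab : a ≠ b := fun h => hne (by rw [h])
    rcases h0 with h0 | h0
    · have ha : a = v := (hvz a).mp (Fin.ext h0)
      subst ha
      exact (hadj b (fun h => hab h.symm)).symm
    · have hb : b = v := (hvz b).mp (Fin.ext h0)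
      subst hb
      exact hadj a hab
  · intro h
    refine ⟨fun hh => G.ne_of_adj h (e.injective hh), ?_⟩
    rcases hcenter a b h with rfl | rfl
    · left; rw [hev]
    · right; rw [hev]

lemma iso_toFin {m : ℕ} (hc : Fintype.card V = m) :
    ∃ H : SimpleGraph (Fin m), Nonempty (G ≃g H) := by
  let f := Fintype.equivFinOfCardEq hc
  refine ⟨SimpleGraph.comap (⇑f.symm) G, ⟨⟨f, ?_⟩⟩⟩
  intro a b
  show G.Adj (f.symm (f a)) (f.symm (f b)) ↔ G.Adj a b
  simp

end Final

section Main
open SimpleGraph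

lemma good1_cycle3 : Good1 (SimpleGraph.cycleGraph 3) :=
  ⟨0, 1, 2, by decide, by decide, by decide⟩
lemma good1_cycle4 : Good1 (SimpleGraph.cycleGraph 4) :=
  ⟨0, 1, 2, by decide, by decide, by decide⟩
lemma good1_top : Good1 (⊤ : SimpleGraph (Fin 4)) :=
  ⟨0, 1, 2, by decide, by decide, by decide⟩
lemma good1_diamond : Good1 diamondGraph := by
  rw [diamond_eq]; exact ⟨0, 2, 1, by decide, by decide, by decide⟩
lemma good1_u13 : Good1 U13 := by
  rw [u13_eq]; exact ⟨1, 0, 2, by decide, by decide, by decide⟩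
lemma good1_path4 : Good1 (SimpleGraph.pathGraph 4) := by
  rw [path4_eq]; exact ⟨0, 1, 2, by decide, by decide, by decide⟩


theorem connected_edgeAlpha1_eq_two_iff {V : Type*} [Fintype V] (G : SimpleGraph V)
    (hconn : G.Connected) {n : ℕ} (hc : Fintype.card V = n) (hn : 3 ≤ n) :
    edgeAlpha1 G = 2 ↔
      Nonempty (G ≃g SimpleGraph.cycleGraph 3) ∨
      Nonempty (G ≃g SimpleGraph.cycleGraph 4) ∨
      Nonempty (G ≃g diamondGraph) ∨
      Nonempty (G ≃g (⊤ : SimpleGraph (Fin 4))) ∨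
      Nonempty (G ≃g U13) ∨
      Nonempty (G ≃g SimpleGraph.pathGraph 4) ∨
      Nonempty (G ≃g _root_.starGraph n) := by
  constructor
  · intro h
    obtain ⟨hg1, hg2⟩ := (edgeAlpha1_eq_two_iff G).mp h
    by_cases h5 : 5 ≤ n
    · exact Or.inr (Or.inr (Or.inr (Or.inr (Or.inr (Or.inr
        (star_case hconn hg1 hg2 hc h5))))))
    · have h34 : n = 3 ∨ n = 4 := by omega
      rcases h34 with rfl | rfl
      · obtain ⟨H, ⟨ψ⟩⟩ := iso_toFin (G := G) hc
        have hHconn : H.Connected := ψ.connected_iff.mp hconn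
        rcases classify3 H hHconn with hχ | hχ
        · exact Or.inl ⟨ψ.trans hχ.some⟩
        · exact Or.inr (Or.inr (Or.inr (Or.inr (Or.inr (Or.inr ⟨ψ.trans hχ.some⟩)))))
      · obtain ⟨H, ⟨ψ⟩⟩ := iso_toFin (G := G) hc
        have hHconn : H.Connected := ψ.connected_iff.mp hconn
        rcases classify4 H hHconn with hχ | hχ | hχ | hχ | hχ | hχ
        · exact Or.inr (Or.inl ⟨ψ.trans hχ.some⟩)
        · exact Or.inr (Or.inr (Or.inl ⟨ψ.trans hχ.some⟩))
        · exact Or.inr (Or.inr (Or.inr (Or.inl ⟨ψ.trans hχ.some⟩)))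
        · exact Or.inr (Or.inr (Or.inr (Or.inr (Or.inl ⟨ψ.trans hχ.some⟩))))
        · exact Or.inr (Or.inr (Or.inr (Or.inr (Or.inr (Or.inl ⟨ψ.trans hχ.some⟩)))))
        · exact Or.inr (Or.inr (Or.inr (Or.inr (Or.inr (Or.inr ⟨ψ.trans hχ.some⟩)))))
  · intro hcase
    apply (edgeAlpha1_eq_two_iff G).mpr
    rcases hcase with hφ | hφ | hφ | hφ | hφ | hφ | hφ <;>
      obtain φ := hφ.some
    · exact ⟨good1_of_iso φ good1_cycle3, good2_of_card_le_four
        (by have := Fintype.card_congr φ.toEquiv; simp at this; omega)⟩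
    · exact ⟨good1_of_iso φ good1_cycle4, good2_of_card_le_four
        (by have := Fintype.card_congr φ.toEquiv; simp at this; omega)⟩
    · exact ⟨good1_of_iso φ good1_diamond, good2_of_card_le_four
        (by have := Fintype.card_congr φ.toEquiv; simp at this; omega)⟩
    · exact ⟨good1_of_iso φ good1_top, good2_of_card_le_four
        (by have := Fintype.card_congr φ.toEquiv; simp at this; omega)⟩
    · exact ⟨good1_of_iso φ good1_u13, good2_of_card_le_four
        (by have := Fintype.card_congr φ.toEquiv; simp at this; omega)⟩
    · exact ⟨good1_of_iso φ good1_path4, good2_of_card_le_four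
        (by have := Fintype.card_congr φ.toEquiv; simp at this; omega)⟩
    · exact ⟨good1_of_iso φ (star_good1 hn), good2_of_star (by omega) φ⟩

end Main
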